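/- Fix integers m, n ≥ 1 and let ℓ ∈ ℂ[u, u⁻¹] be a Laurent polynomial of the form ℓ = uᵐ + Σ_{i=−n}^{m−1} cᵢuⁱ with c₋ₙ ≠ 0, and let χ̂ ∈ ℂ((u)) be a series of order −1 with χ̂ⁿ = ℓ. Then for all integers 0 ≤ k₁, k₂ ≤ n one has −res_φ [ (ℓ′χ̂^{−k₁})₋ · (ℓ′χ̂^{−k₂})₋ / ℓ′ ] dz = n·δ_{n, k₁+k₂}. -/

import Mathlib

noncomputable section

open HahnSeries

/-- Formal Laurent series over `ℂ`: the field `ℂ((u))`, where the Hahn-series variable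
is `u` itself (the coefficient of `uⁱ` is the Hahn coefficient at index `i`). -/
abbrev LS : Type := LaurentSeries ℂ

/-- Termwise derivative `d/du`. -/
def Du (f : LS) : LS := LaurentSeries.derivative ℂ f

/-- Truncation keeping the coefficients with index satisfying `P`. -/
def truncP (P : ℤ → Prop) [DecidablePred P] (f : LS) : LS :=
  ⟨fun j => if P j then f.coeff j else 0, by
    refine f.isPWO_support'.mono ?_
    intro j hj
    have hj' : (if P j then f.coeff j else 0) ≠ 0 := hj
    by_cases h : P j
    · simpa [h] using hj'
    · simp [h] at hj'⟩

/-- `f₋`: the part of `f ∈ ℂ((u))` with negative powers of `u`. -/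
def uNeg (f : LS) : LS := truncP (fun j => j < 0) f

/-- `res_φ f dz`: the coefficient of `u⁻¹`. -/
def resPhi (f : LS) : ℂ := f.coeff (-1)

/-- The Laurent polynomial `ℓ = uᵐ + Σ_{i=−n}^{m−1} cᵢuⁱ` in `ℂ((u))`. -/
def ellStd (m n : ℕ) (c : ℤ → ℂ) : LS :=
  single (m : ℤ) 1 + ∑ i ∈ Finset.Icc (-(n : ℤ)) ((m : ℤ) - 1), single i (c i)


-- ==================== auxiliary development ====================

lemma truncP_coeff (P : ℤ → Prop) [DecidablePred P] (f : LS) (j : ℤ) :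
    (truncP P f).coeff j = if P j then f.coeff j else 0 := rfl

-- coefficient of Du
lemma Du_coeff (f : LS) (j : ℤ) : (Du f).coeff j = (j + 1 : ℤ) • f.coeff (j + 1) := by
  show ((LaurentSeries.hasseDeriv ℂ 1) f).coeff j = _
  rw [LaurentSeries.hasseDeriv_coeff]
  norm_num [Ring.choose_one_right]

lemma Du_add (f g : LS) : Du (f + g) = Du f + Du g := map_add _ _ _
lemma Du_sub (f g : LS) : Du (f - g) = Du f - Du g := map_sub _ _ _

lemma Du_single (i : ℤ) (a : ℂ) : Du (single i a) = single (i - 1) (i • a) := by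
  ext j
  rw [Du_coeff]
  by_cases h : j = i - 1
  · subst h; simp [coeff_single, sub_add_cancel]
  · rw [coeff_single_of_ne h, coeff_single_of_ne (by omega : j + 1 ≠ i), smul_zero]

lemma Du_one : Du 1 = 0 := by
  have : (1 : LS) = single 0 1 := rfl
  rw [this, Du_single]; simp

-- order-at-least predicate
def oal (N : ℤ) (f : LS) : Prop := ∀ j : ℤ, j < N → f.coeff j = 0

lemma oal_mul {A B : ℤ} {f g : LS} (hf : oal A f) (hg : oal B g) : oal (A + B) (f * g) := by
  intro j hj
  rw [HahnSeries.coeff_mul]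
  refine Finset.sum_eq_zero fun ij hij => ?_
  rw [Finset.mem_addAntidiagonal] at hij
  obtain ⟨-, -, hsum⟩ := hij
  rcases lt_or_ge ij.1 A with h | h
  · rw [hf _ h, zero_mul]
  · rw [hg _ (by omega), mul_zero]

lemma oal_self (f : LS) : oal f.order f := fun _ h => coeff_eq_zero_of_lt_order h

lemma oal_Du {N : ℤ} {f : LS} (hf : oal N f) : oal (N - 1) (Du f) := by
  intro j hj
  rw [Du_coeff, hf _ (by omega), smul_zero]

lemma oal_mono {N N' : ℤ} {f : LS} (h : N' ≤ N) (hf : oal N f) : oal N' f :=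
  fun j hj => hf j (by omega)

lemma oal_single (i : ℤ) (a : ℂ) : oal i (single i a) := by
  intro j hj; rw [coeff_single_of_ne (by omega)]

lemma order_eq_of_oal {N : ℤ} {f : LS} (hf : oal N f) (h0 : f.coeff N ≠ 0) : f.order = N := by
  have hne : f ≠ 0 := fun h => h0 (by simp [h])
  rcases lt_trichotomy f.order N with h | h | h
  · exact absurd (hf _ h) (mt coeff_order_eq_zero.mp hne)
  · exact h
  · exact absurd (coeff_eq_zero_of_lt_order h) h0

lemma oal_inv {N : ℤ} {f : LS} (hf : oal N f) (h0 : f.coeff N ≠ 0) : oal (-N) f⁻¹ := by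
  have hne : f ≠ 0 := fun h => h0 (by simp [h])
  have hinv : f⁻¹ ≠ 0 := inv_ne_zero hne
  have horder : f.order + f⁻¹.order = 0 := by
    rw [← order_mul hne hinv, mul_inv_cancel₀ hne, order_one]
  have : f⁻¹.order = -N := by rw [order_eq_of_oal hf h0] at horder; omega
  intro j hj
  exact coeff_eq_zero_of_lt_order (by omega)

lemma oal_pow {N : ℤ} {f : LS} (hf : oal N f) (k : ℕ) : oal (k * N) (f ^ k) := by
  induction k with
  | zero =>
    intro j hj; simp only [Nat.cast_zero, zero_mul] at hj; simp only [pow_zero]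
    rw [show (1:LS) = single 0 1 from rfl, coeff_single_of_ne (by omega)]
  | succ k ih =>
    have := oal_mul ih hf
    rw [pow_succ]
    exact oal_mono (le_of_eq (by push_cast; ring)) this

-- Leibniz machinery
lemma Du_single_mul_single (i i' : ℤ) (a b : ℂ) :
    Du (single i a * single i' b) =
      Du (single i a) * single i' b + single i a * Du (single i' b) := by
  rw [single_mul_single, Du_single, Du_single, Du_single, single_mul_single, single_mul_single]
  have h1 : i - 1 + i' = i + i' - 1 := by ring
  have h2 : i + (i' - 1) = i + i' - 1 := by ring
  rw [h1, h2]
  ext j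
  rw [HahnSeries.coeff_add, coeff_single, coeff_single, coeff_single]
  by_cases h : j = i + i' - 1 <;> simp only [h, if_pos, if_neg, if_true]
  · simp only [zsmul_eq_mul]; push_cast; ring
  · simp [h]

lemma Du_sum {s : Finset ℤ} (F : ℤ → LS) : Du (∑ i ∈ s, F i) = ∑ i ∈ s, Du (F i) :=
  map_sum (LaurentSeries.derivative ℂ) _ _

lemma coeff_sum {s : Finset ℤ} (F : ℤ → LS) (j : ℤ) :
    (∑ i ∈ s, F i).coeff j = ∑ i ∈ s, (F i).coeff j := by
  classical
  induction s using Finset.induction_on with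
  | empty => simp
  | insert _ _ h ih => rw [Finset.sum_insert h, Finset.sum_insert h, HahnSeries.coeff_add, ih]

set_option maxHeartbeats 1000000 in
lemma Du_sum_mul_sum (s t : Finset ℤ) (a b : ℤ → ℂ) :
    Du ((∑ i ∈ s, single i (a i)) * (∑ i ∈ t, single i (b i))) =
      Du (∑ i ∈ s, single i (a i)) * (∑ i ∈ t, single i (b i)) +
      (∑ i ∈ s, single i (a i)) * Du (∑ i ∈ t, single i (b i)) := by
  have e1 : Du ((∑ i ∈ s, single i (a i)) * (∑ i ∈ t, single i (b i)))
      = ∑ i ∈ s, ∑ i' ∈ t, (Du (single i (a i)) * single i' (b i')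
          + single i (a i) * Du (single i' (b i'))) := by
    rw [Finset.sum_mul_sum, Du_sum]
    refine Finset.sum_congr rfl fun i _ => ?_
    rw [Du_sum]
    exact Finset.sum_congr rfl fun i' _ => Du_single_mul_single i i' (a i) (b i')
  rw [e1]
  simp only [Du_sum, Finset.sum_mul, Finset.mul_sum]
  rw [← Finset.sum_add_distrib]
  exact Finset.sum_comm.trans (Finset.sum_congr rfl fun x _ => Finset.sum_add_distrib)

lemma trunc_eq_sum (T : ℤ) (f : LS) :
    truncP (· ≤ T) f = ∑ i ∈ Finset.Icc f.order T, single i (f.coeff i) := by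
  ext j
  rw [truncP_coeff, coeff_sum]
  simp only [coeff_single]
  by_cases hmem : j ∈ Finset.Icc f.order T
  · rw [if_pos (Finset.mem_Icc.mp hmem).2]
    exact ((Finset.sum_eq_single_of_mem j hmem
      (fun i _ hne => if_neg (fun (h : j = i) => hne h.symm))).trans (if_pos rfl)).symm
  · have hmem' := hmem
    rw [Finset.mem_Icc] at hmem'
    by_cases hj : j ≤ T
    · rw [if_pos hj, oal_self f j (by omega)]
      exact (Finset.sum_eq_zero (fun i hi => if_neg (fun (h : j = i) => hmem (h ▸ hi)))).symm
    · rw [if_neg hj]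
      exact (Finset.sum_eq_zero (fun i hi => if_neg (fun (h : j = i) => hmem (h ▸ hi)))).symm

lemma oal_trunc_sub (T : ℤ) (f : LS) : oal (T + 1) (f - truncP (· ≤ T) f) := by
  intro j hj
  rw [HahnSeries.coeff_sub, truncP_coeff, if_pos (by omega : j ≤ T), sub_self]

lemma oal_trunc {N : ℤ} {f : LS} (hf : oal N f) (T : ℤ) : oal N (truncP (· ≤ T) f) := by
  intro j hj
  rw [truncP_coeff, hf j hj, ite_self]

theorem Du_mul (f g : LS) : Du (f * g) = Du f * g + f * Du g := by
  ext j
  set Nf := f.order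
  set Ng := g.order
  set T : ℤ := max (j + 1 - Nf) (j + 1 - Ng) with hT
  set F := truncP (· ≤ T) f with hF
  set G := truncP (· ≤ T) g with hG
  have hFG : Du (F * G) = Du F * G + F * Du G := by
    rw [hF, hG, trunc_eq_sum, trunc_eq_sum]
    exact Du_sum_mul_sum _ _ _ _
  have hf' : oal (T + 1) (f - F) := oal_trunc_sub T f
  have hg' : oal (T + 1) (g - G) := oal_trunc_sub T g
  have hFo : oal Nf F := oal_trunc (oal_self f) T
  have hGo : oal Ng G := oal_trunc (oal_self g) T
  -- LHS agreement
  have h1 : (Du (f * g)).coeff j = (Du (F * G)).coeff j := by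
    rw [Du_coeff, Du_coeff]
    congr 1
    have : f * g - F * G = (f - F) * g + F * (g - G) := by ring
    have hz : (f * g - F * G).coeff (j + 1) = 0 := by
      rw [this]
      rw [HahnSeries.coeff_add,
        oal_mul hf' (oal_self g) (j+1) (by omega),
        oal_mul hFo hg' (j+1) (by omega), add_zero]
    rw [HahnSeries.coeff_sub] at hz
    exact sub_eq_zero.mp hz
  have h2 : (Du f * g + f * Du g).coeff j = (Du F * G + F * Du G).coeff j := by
    have : Du f * g + f * Du g - (Du F * G + F * Du G)
        = Du (f - F) * g + Du F * (g - G) + ((f - F) * Du g + F * Du (g - G)) := by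
      have e1 : Du (f - F) = Du f - Du F := map_sub _ _ _
      have e2 : Du (g - G) = Du g - Du G := map_sub _ _ _
      rw [e1, e2]; ring
    have hz : (Du f * g + f * Du g - (Du F * G + F * Du G)).coeff j = 0 := by
      rw [this]
      rw [HahnSeries.coeff_add, HahnSeries.coeff_add, HahnSeries.coeff_add]
      rw [oal_mul (oal_Du hf') (oal_self g) j (by omega),
        oal_mul (oal_Du hFo) hg' j (by omega),
        oal_mul hf' (oal_Du (oal_self g)) j (by omega),
        oal_mul hFo (oal_Du hg') j (by omega)]
      ring
    rw [HahnSeries.coeff_sub] at hz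
    exact sub_eq_zero.mp hz
  rw [h1, hFG, h2]

-- constants and power rules
def Cc (r : ℂ) : LS := single 0 r

lemma Cc_add (r s : ℂ) : Cc (r + s) = Cc r + Cc s := by
  ext j; rw [Cc, Cc, Cc, HahnSeries.coeff_add, coeff_single, coeff_single, coeff_single]
  by_cases h : j = 0 <;> simp [h]

lemma Cc_one : Cc 1 = 1 := rfl
lemma Cc_zero : Cc 0 = 0 := single_eq_zero
lemma Cc_neg (r : ℂ) : Cc (-r) = -Cc r := by
  ext j; rw [Cc, Cc, HahnSeries.coeff_neg, coeff_single, coeff_single]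
  by_cases h : j = 0 <;> simp [h]

lemma Cc_mul_coeff (r : ℂ) (x : LS) (j : ℤ) : (Cc r * x).coeff j = r * x.coeff j := by
  show ((single (0:ℤ) r) * x).coeff j = r * x.coeff j
  have := coeff_single_mul_add (r := r) (x := x) (a := j) (b := (0:ℤ))
  rwa [add_zero] at this

lemma resPhi_Cc_mul (r : ℂ) (x : LS) : resPhi (Cc r * x) = r * resPhi x :=
  Cc_mul_coeff r x (-1)

-- === new material ===
lemma Du_pow (f : LS) (k : ℕ) : Du (f ^ (k + 1)) = Cc ((k : ℂ) + 1) * (f ^ k * Du f) := by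
  induction k with
  | zero => simp [Cc_one]
  | succ k ih =>
    have h3 : Cc (((k+1 : ℕ) : ℂ) + 1) = Cc ((k:ℂ) + 1) + 1 := by
      rw [show (((k+1:ℕ) : ℂ) + 1) = (((k:ℂ)+1) + 1 : ℂ) by push_cast; ring, Cc_add, Cc_one]
    rw [pow_succ, Du_mul, ih, h3]
    ring

lemma Du_inv (f : LS) (hf : f ≠ 0) : Du f⁻¹ = -(Du f * f⁻¹ * f⁻¹) := by
  have h1 : f * f⁻¹ = 1 := mul_inv_cancel₀ hf
  have h2 := congrArg Du h1
  rw [Du_mul, Du_one] at h2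
  have h3 := congrArg (· * f⁻¹) h2
  simp only [add_mul, zero_mul] at h3
  have h4 : f * Du f⁻¹ * f⁻¹ = Du f⁻¹ := by
    rw [mul_comm f (Du f⁻¹), mul_assoc, h1, mul_one]
  rw [h4] at h3
  linear_combination h3

lemma Du_zpow (f : LS) (hf : f ≠ 0) (N : ℤ) :
    Du (f ^ N) = Cc (N : ℂ) * (f ^ N * f⁻¹ * Du f) := by
  cases N with
  | ofNat k =>
    cases k with
    | zero => simp [Du_one, Cc_zero]
    | succ k =>
      rw [show (Int.ofNat (k+1)) = ((k+1 : ℕ) : ℤ) from rfl, zpow_natCast, Du_pow]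
      congr 1
      · exact congrArg Cc (by push_cast; ring)
      · rw [pow_succ, mul_assoc (f ^ k) f f⁻¹, mul_inv_cancel₀ hf, mul_one]
  | negSucc k =>
    have hfk : f ^ (k + 1) ≠ 0 := pow_ne_zero _ hf
    rw [zpow_negSucc, Du_inv _ hfk, Du_pow, Int.cast_negSucc]
    rw [show ((k:ℂ) + 1) = ((k+1 : ℕ) : ℂ) by push_cast; ring, Cc_neg]
    have e : f ^ k * (f ^ (k+1))⁻¹ = f⁻¹ := by
      rw [pow_succ, mul_inv_rev, mul_comm f⁻¹ ((f ^ k)⁻¹), ← mul_assoc,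
        mul_inv_cancel₀ (pow_ne_zero k hf), one_mul]
    linear_combination (-(Cc (((k+1:ℕ)) : ℂ)) * Du f * (f ^ (k+1))⁻¹) * e

lemma resPhi_Du (f : LS) : resPhi (Du f) = 0 := by
  show (Du f).coeff (-1) = 0
  rw [Du_coeff]; norm_num

lemma resPhi_oal {f : LS} (h : oal 0 f) : resPhi f = 0 := h (-1) (by omega)

lemma resPhi_add (f g : LS) : resPhi (f + g) = resPhi f + resPhi g := HahnSeries.coeff_add
lemma resPhi_sub (f g : LS) : resPhi (f - g) = resPhi f - resPhi g := HahnSeries.coeff_sub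

-- the key residue: resPhi (χ⁻¹ * Du χ) = -1 for χ of order exactly -1
lemma resPhi_logderiv (χ : LS) (h1 : χ.coeff (-1) ≠ 0) (h2 : oal (-1) χ) :
    resPhi (χ⁻¹ * Du χ) = -1 := by
  have hχ : χ ≠ 0 := fun h => h1 (by rw [h]; simp)
  set a := χ.coeff (-1) with ha
  set v : LS := single 1 a⁻¹ * χ with hv
  have hva : single (-1 : ℤ) a * v = χ := by
    rw [hv, ← mul_assoc, single_mul_single, mul_inv_cancel₀ h1]
    show (1 : LS) * χ = χ
    exact one_mul χ
  have hvcoeff : ∀ j : ℤ, v.coeff j = a⁻¹ * χ.coeff (j - 1) := by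
    intro j
    rw [hv, show j = (j - 1) + 1 by ring, coeff_single_mul_add]
    ring_nf
  have hv0 : v.coeff 0 = 1 := by
    rw [hvcoeff, show (0:ℤ) - 1 = -1 by norm_num, ← ha]
    exact inv_mul_cancel₀ h1
  have hvo : oal 0 v := by
    intro j hj
    rw [hvcoeff, h2 (j-1) (by omega), mul_zero]
  set w : LS := v - 1 with hw
  have hwo : oal 1 w := by
    intro j hj
    rw [hw, HahnSeries.coeff_sub]
    rcases lt_trichotomy j 0 with h | h | h
    · rw [hvo j h, show (1:LS) = single 0 1 from rfl, coeff_single_of_ne (by omega), sub_zero]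
    · rw [h, hv0, show (1:LS) = single 0 1 from rfl, coeff_single_same, sub_self]
    · omega
  have hveq : v = 1 + w := by rw [hw]; ring
  have hDχ : Du χ = single (-2 : ℤ) (-a) * v + single (-1 : ℤ) a * Du w := by
    rw [← hva, Du_mul, Du_single, hveq, Du_add, Du_one, zero_add]
    have hsm : ((-1:ℤ) • a) = -a := by rw [neg_smul, one_smul]
    rw [show ((-1:ℤ) - 1) = -2 by norm_num, hsm]
  have hvne : v ≠ 0 := fun h => by rw [h] at hv0; simp at hv0
  have hmul1 : χ * (v⁻¹ * single 1 a⁻¹) = 1 := by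
    have e : χ * (v⁻¹ * single 1 a⁻¹) = (single 1 a⁻¹ * χ) * v⁻¹ := by ring
    rw [e, ← hv, mul_inv_cancel₀ hvne]
  have hχinv : χ⁻¹ = v⁻¹ * single 1 a⁻¹ := inv_eq_of_mul_eq_one_right hmul1
  have hterm1 : χ⁻¹ * (single (-2 : ℤ) (-a) * v) = single (-1 : ℤ) (-1 : ℂ) := by
    rw [hχinv]
    have e : v⁻¹ * single 1 a⁻¹ * (single (-2:ℤ) (-a) * v)
        = (v⁻¹ * v) * (single 1 a⁻¹ * single (-2:ℤ) (-a)) := by ring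
    rw [e, inv_mul_cancel₀ hvne, one_mul, single_mul_single]
    rw [show ((1:ℤ) + -2) = -1 by norm_num, show a⁻¹ * -a = -(a⁻¹ * a) by ring,
      inv_mul_cancel₀ h1]
  have hoinv : oal 1 χ⁻¹ := oal_inv h2 h1
  have hterm2 : resPhi (χ⁻¹ * (single (-1:ℤ) a * Du w)) = 0 := by
    refine resPhi_oal ?_
    have h1' : oal (-1 : ℤ) (single (-1:ℤ) a) := fun j hj => coeff_single_of_ne (by omega)
    have h2' : oal 0 (Du w) := by
      have := oal_Du hwo; exact oal_mono (by omega) this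
    have := oal_mul hoinv (oal_mul h1' h2')
    exact oal_mono (by omega) this
  rw [hDχ, mul_add, resPhi_add, hterm1, hterm2, add_zero]
  show (single (-1:ℤ) (-1:ℂ)).coeff (-1) = -1
  rw [coeff_single_same]

-- coefficients of ellStd
lemma ellStd_coeff (m n : ℕ) (c : ℤ → ℂ) (j : ℤ) :
    (ellStd m n c).coeff j = (if j = (m:ℤ) then 1 else 0)
      + (if (-(n:ℤ)) ≤ j ∧ j ≤ (m:ℤ) - 1 then c j else 0) := by
  rw [ellStd, HahnSeries.coeff_add, coeff_sum]
  simp only [coeff_single]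
  congr 1
  · exact ite_congr rfl (fun _ => rfl) (fun _ => rfl)
  by_cases hmem : j ∈ Finset.Icc (-(n:ℤ)) ((m:ℤ) - 1)
  · rw [if_pos (Finset.mem_Icc.mp hmem)]
    exact (Finset.sum_eq_single_of_mem j hmem
      (fun i _ hne => if_neg (fun (h : j = i) => hne h.symm))).trans (if_pos rfl)
  · rw [if_neg (fun h => hmem (Finset.mem_Icc.mpr h))]
    exact Finset.sum_eq_zero (fun i hi => if_neg (fun (h : j = i) => hmem (h ▸ hi)))

-- main theorem
/-- For `ℓ = uᵐ + Σ_{i=−n}^{m−1} cᵢuⁱ` with `c₋ₙ ≠ 0` and `χ̂ ∈ ℂ((u))`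
a series of order `−1` with `χ̂ⁿ = ℓ`, for all `0 ≤ k₁, k₂ ≤ n`:
`−res_φ [(ℓ′χ̂^{−k₁})₋ (ℓ′χ̂^{−k₂})₋ / ℓ′] dz = n·δ_{n,k₁+k₂}`. -/
theorem stmt11 (m n : ℕ) (hm : 1 ≤ m) (hn : 1 ≤ n) (c : ℤ → ℂ)
    (hc : c (-(n : ℤ)) ≠ 0)
    (χ : LS) (hχ1 : χ.coeff (-1) ≠ 0) (hχ2 : ∀ j : ℤ, j < -1 → χ.coeff j = 0)
    (hroot : χ ^ n = ellStd m n c) :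
    ∀ k₁ k₂ : ℕ, k₁ ≤ n → k₂ ≤ n →
      -resPhi (uNeg (Du (ellStd m n c) * χ ^ (-(k₁ : ℤ))) *
          uNeg (Du (ellStd m n c) * χ ^ (-(k₂ : ℤ))) / Du (ellStd m n c))
        = (n : ℂ) * (if k₁ + k₂ = n then 1 else 0) := by
  intro k₁ k₂ hk₁ hk₂
  set L : LS := ellStd m n c with hL
  -- χ nonzero and its order facts
  have hχne : χ ≠ 0 := fun h => hχ1 (by rw [h]; simp)
  have hoχ : oal (-1) χ := hχ2
  have hoχinv : oal 1 χ⁻¹ := by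
    have := oal_inv hoχ hχ1
    exact oal_mono (by omega) this
  -- oal for χ ^ (-(k:ℤ))
  have hzp : ∀ k : ℕ, oal (k : ℤ) (χ ^ (-(k:ℤ))) := by
    intro k
    have e : χ ^ (-(k:ℤ)) = (χ⁻¹) ^ k := by
      rw [zpow_neg, zpow_natCast, inv_pow]
    rw [e]
    have := oal_pow hoχinv k
    exact oal_mono (by omega) this
  -- facts about L and Du L
  have hLlow : oal (-(n:ℤ)) L := by
    intro j hj
    rw [hL, ellStd_coeff]
    rw [if_neg (by omega : ¬ j = (m:ℤ)), if_neg (by omega), add_zero]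
  have hLn : L.coeff (-(n:ℤ)) = c (-(n:ℤ)) := by
    rw [hL, ellStd_coeff, if_neg (by omega), if_pos (by omega), zero_add]
  have hDLlow : oal (-(n:ℤ) - 1) (Du L) := oal_Du hLlow
  have hDLc : (Du L).coeff (-(n:ℤ) - 1) ≠ 0 := by
    rw [Du_coeff, show (-(n:ℤ) - 1 + 1) = -(n:ℤ) by ring, hLn]
    simp only [zsmul_eq_mul]
    exact mul_ne_zero (by exact_mod_cast (by push_cast; norm_num; omega : (-(n:ℤ) : ℂ) ≠ 0)) hc
  have hDLne : Du L ≠ 0 := fun h => hDLc (by rw [h]; simp)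
  have hDLinv : oal ((n:ℤ) + 1) (Du L)⁻¹ := by
    have := oal_inv hDLlow hDLc
    exact oal_mono (by omega) this
  -- L as a zpow of χ
  have hLz : L = χ ^ ((n:ℤ)) := by rw [← hroot, zpow_natCast]
  -- the key residue computation
  have key_res : ∀ K : ℕ, resPhi (Du L * χ ^ (-(K:ℤ)))
      = if K = n then -(n:ℂ) else 0 := by
    intro K
    have hDuL : Du L = Cc ((n:ℤ) : ℂ) * (χ ^ ((n:ℤ)) * χ⁻¹ * Du χ) := by
      rw [hLz, Du_zpow χ hχne]
    have hcomb : Du L * χ ^ (-(K:ℤ))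
        = Cc ((n:ℤ) : ℂ) * (χ ^ ((n:ℤ) - (K:ℤ)) * χ⁻¹ * Du χ) := by
      rw [hDuL, show ((n:ℤ) - (K:ℤ)) = (n:ℤ) + (-(K:ℤ)) by ring,
        zpow_add₀ hχne]
      ring
    rw [hcomb]
    by_cases hK : K = n
    · subst hK
      rw [show ((K:ℤ) - (K:ℤ)) = 0 by ring, zpow_zero, one_mul, if_pos rfl]
      rw [resPhi_Cc_mul, resPhi_logderiv χ hχ1 hoχ]
      push_cast; ring
    · rw [if_neg hK]
      set N : ℤ := (n:ℤ) - (K:ℤ) with hN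
      have hNne : N ≠ 0 := by omega
      have hres0 : (N : ℂ) * resPhi (χ ^ N * χ⁻¹ * Du χ) = 0 := by
        rw [← resPhi_Cc_mul, ← Du_zpow χ hχne, resPhi_Du]
      have : resPhi (χ ^ N * χ⁻¹ * Du χ) = 0 := by
        rcases mul_eq_zero.mp hres0 with h | h
        · exact absurd (by exact_mod_cast h) hNne
        · exact h
      rw [resPhi_Cc_mul, this, mul_zero]
  -- decomposition of the main expression
  set A : LS := Du L * χ ^ (-(k₁:ℤ)) with hA
  set B : LS := Du L * χ ^ (-(k₂:ℤ)) with hB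
  set P₁ : LS := A - uNeg A with hP₁
  set P₂ : LS := B - uNeg B with hP₂
  have hoP : ∀ f : LS, oal 0 (f - uNeg f) := by
    intro f j hj
    rw [HahnSeries.coeff_sub, uNeg, truncP_coeff, if_pos hj, sub_self]
  have hoP₁ : oal 0 P₁ := hP₁ ▸ hoP A
  have hoP₂ : oal 0 P₂ := hP₂ ▸ hoP B
  have huA : uNeg A = A - P₁ := by rw [hP₁]; ring
  have huB : uNeg B = B - P₂ := by rw [hP₂]; ring
  have hsplit : uNeg A * uNeg B / Du L
      = A * B * (Du L)⁻¹ - P₁ * B * (Du L)⁻¹ - A * P₂ * (Du L)⁻¹ + P₁ * P₂ * (Du L)⁻¹ := by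
    rw [div_eq_mul_inv, huA, huB]; ring
  -- term 1
  have hT1 : A * B * (Du L)⁻¹ = Du L * χ ^ (-((k₁ + k₂ : ℕ) : ℤ)) := by
    rw [hA, hB]
    have e1 : χ ^ (-(k₁:ℤ)) * χ ^ (-(k₂:ℤ)) = χ ^ (-((k₁ + k₂ : ℕ) : ℤ)) := by
      rw [← zpow_add₀ hχne]
      congr 1
      push_cast; ring
    calc Du L * χ ^ (-(k₁:ℤ)) * (Du L * χ ^ (-(k₂:ℤ))) * (Du L)⁻¹
        = (Du L * (Du L)⁻¹) * Du L * (χ ^ (-(k₁:ℤ)) * χ ^ (-(k₂:ℤ))) := by ring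
      _ = Du L * χ ^ (-((k₁ + k₂ : ℕ) : ℤ)) := by
          rw [mul_inv_cancel₀ hDLne, one_mul, e1]
  -- term 2
  have hT2 : resPhi (P₁ * B * (Du L)⁻¹) = 0 := by
    refine resPhi_oal ?_
    have e : P₁ * B * (Du L)⁻¹ = P₁ * χ ^ (-(k₂:ℤ)) * (Du L * (Du L)⁻¹) := by
      rw [hB]; ring
    rw [e, mul_inv_cancel₀ hDLne, mul_one]
    have := oal_mul hoP₁ (hzp k₂)
    exact oal_mono (by omega) this
  -- term 3
  have hT3 : resPhi (A * P₂ * (Du L)⁻¹) = 0 := by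
    refine resPhi_oal ?_
    have e : A * P₂ * (Du L)⁻¹ = P₂ * χ ^ (-(k₁:ℤ)) * (Du L * (Du L)⁻¹) := by
      rw [hA]; ring
    rw [e, mul_inv_cancel₀ hDLne, mul_one]
    have := oal_mul hoP₂ (hzp k₁)
    exact oal_mono (by omega) this
  -- term 4
  have hT4 : resPhi (P₁ * P₂ * (Du L)⁻¹) = 0 := by
    refine resPhi_oal ?_
    have := oal_mul (oal_mul hoP₁ hoP₂) hDLinv
    exact oal_mono (by omega) this
  rw [hsplit, resPhi_add, resPhi_sub, resPhi_sub, hT2, hT3, hT4, hT1, key_res (k₁ + k₂)]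
  by_cases h : k₁ + k₂ = n
  · rw [if_pos h, if_pos h]; ring
  · rw [if_neg h, if_neg h]; ring
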